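/- Let F : ℝⁿ → ℝⁿ be monotone and L-Lipschitz with a zero z*, let D = ‖z₀ − z*‖, and run unconstrained EAG with step size η ∈ (0, 1/(√3 L)). Then for all T ≥ 1, ‖F(z_T)‖² ≤ [4(1+ηL)²/(η²L²(1−3η²L²))]·(D²L²/T²). In particular, with η = 1/(3L), ‖F(z_T)‖² ≤ 96·D²L²/T². -/

import Mathlib

open RealInnerProductSpace


-- polynomial inequality in x = ηL
lemma xpoly_ineq (x : ℝ) (hx : 0 < x) (h3 : 3*x^2 < 1) :
    0 ≤ 2*(1-x^2)*(1+x)^2 - (2*(1-x^2) + x^4*(1+(1+x+x^2)^2)) := by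
  nlinarith [sq_nonneg x, sq_nonneg (x^2), sq_nonneg (x^3), mul_pos hx hx,
    mul_pos (mul_pos hx hx) hx, sq_nonneg (x-1), sq_nonneg (x+1)]

lemma norm_smul_sq {E : Type*} [NormedAddCommGroup E] [InnerProductSpace ℝ E]
    (t : ℝ) (x : E) : ‖t • x‖^2 = t^2*‖x‖^2 := by
  rw [norm_smul, Real.norm_eq_abs, mul_pow, sq_abs]

lemma eag_step {E : Type*} [NormedAddCommGroup E] [InnerProductSpace ℝ E]
    (η L kr : ℝ) (a b c w : E)
    (hη : 0 < η) (hL : 0 < L) (hk : 0 ≤ kr) (hp1 : η^2*L^2 < 1)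
    (hm : 0 ≤ ⟪c - a, -(η • b) - (1/(kr+1)) • w⟫)
    (hlip : ‖c - b‖ ≤ L * (η * ‖a - b‖)) :
    η*(kr+1)^2/2*‖c‖^2 + (kr+1)*((1 - 1/(kr+1))*⟪c, w⟫ - η*⟪c, b⟫) ≤
      η*kr^2/2*‖a‖^2 + kr*⟪a, w⟫ + η*((η^2*L^2)/(2*(1-η^2*L^2)))*‖a‖^2 := by
  have hK : (0:ℝ) < kr + 1 := by linarith
  have hγ : (0:ℝ) < 1 - η^2*L^2 := by linarith
  have e : ⟪c - a, -(η • b) - (1/(kr+1)) • w⟫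
      = -(η*⟪c,b⟫) + η*⟪a,b⟫ - (1/(kr+1))*⟪c,w⟫ + (1/(kr+1))*⟪a,w⟫ := by
    simp [inner_sub_left, inner_sub_right, inner_neg_right, real_inner_smul_right]
    ring
  rw [e] at hm
  have hlip2 : ‖c - b‖^2 ≤ η^2*L^2*‖a - b‖^2 := by
    calc ‖c - b‖^2 ≤ (L*(η*‖a - b‖))^2 := pow_le_pow_left₀ (norm_nonneg _) hlip 2
    _ = η^2*L^2*‖a - b‖^2 := by ring
  have eab : ‖a - b‖^2 = ‖a‖^2 - 2*⟪a,b⟫ + ‖b‖^2 := norm_sub_sq_real a b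
  have ecb : ‖c - b‖^2 = ‖c‖^2 - 2*⟪c,b⟫ + ‖b‖^2 := norm_sub_sq_real c b
  have esos : ‖a - ((1-η^2*L^2)*(kr+1)) • (a - b)‖^2
      = ‖a‖^2 - 2*((1-η^2*L^2)*(kr+1))*(‖a‖^2 - ⟪a,b⟫) + ((1-η^2*L^2)*(kr+1))^2*‖a - b‖^2 := by
    rw [norm_sub_sq_real, real_inner_smul_right, inner_sub_right,
      real_inner_self_eq_norm_sq, norm_smul_sq]
    ring
  have hsos : 0 ≤ η/(2*(1-η^2*L^2)) * ‖a - ((1-η^2*L^2)*(kr+1)) • (a - b)‖^2 := by positivity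
  have t1 : 0 ≤ kr*(kr+1)*(-(η*⟪c,b⟫) + η*⟪a,b⟫ - (1/(kr+1))*⟪c,w⟫ + (1/(kr+1))*⟪a,w⟫) :=
    mul_nonneg (by positivity) hm
  have t3 : 0 ≤ η*(kr+1)^2/2*(η^2*L^2*‖a - b‖^2 - ‖c - b‖^2) :=
    mul_nonneg (by positivity) (by linarith)
  have key : (η*kr^2/2*‖a‖^2 + kr*⟪a,w⟫ + η*((η^2*L^2)/(2*(1-η^2*L^2)))*‖a‖^2)
      - (η*(kr+1)^2/2*‖c‖^2 + (kr+1)*((1 - 1/(kr+1))*⟪c, w⟫ - η*⟪c, b⟫))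
      = kr*(kr+1)*(-(η*⟪c,b⟫) + η*⟪a,b⟫ - (1/(kr+1))*⟪c,w⟫ + (1/(kr+1))*⟪a,w⟫)
        + η/(2*(1-η^2*L^2)) * ‖a - ((1-η^2*L^2)*(kr+1)) • (a - b)‖^2
        + η*(kr+1)^2/2*(η^2*L^2*‖a - b‖^2 - ‖c - b‖^2) := by
    rw [esos, ecb, eab]
    field_simp
    ring
  linarith [t1, hsos, t3]


lemma sum_inv_sq_le (k : ℕ) : ∑ t ∈ Finset.Ico 2 k, (1:ℝ)/(t:ℝ)^2 ≤ 1 := by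
  rcases le_or_gt k 2 with hk | hk
  · rw [Finset.Ico_eq_empty (by omega)]
    norm_num
  · have aux : ∀ m : ℕ, 2 ≤ m → ∑ t ∈ Finset.Ico 2 m, (1:ℝ)/(t:ℝ)^2 ≤ 1 - 1/((m:ℝ)-1) := by
      intro m hm
      induction m, hm using Nat.le_induction with
      | base => norm_num
      | succ m hm ihm =>
        rw [Finset.sum_Ico_succ_top hm]
        have hm2 : (2:ℝ) ≤ (m:ℝ) := by exact_mod_cast hm
        have h1 : (0:ℝ) < (m:ℝ) - 1 := by linarith
        have h0 : (0:ℝ) < (m:ℝ) := by linarith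
        have key : 1/(m:ℝ)^2 ≤ 1/((m:ℝ)-1) - 1/(m:ℝ) := by
          rw [div_sub_div _ _ (ne_of_gt h1) (ne_of_gt h0)]
          rw [div_le_div_iff₀ (by positivity) (by positivity)]
          ring_nf
          nlinarith
        push_cast
        rw [show ((m:ℝ)+1-1 : ℝ) = (m:ℝ) from by ring]
        linarith [ihm]
    have := aux k (by omega)
    have h1 : (0:ℝ) < (k:ℝ) - 1 := by
      have : (2:ℝ) ≤ (k:ℝ) := by exact_mod_cast le_of_lt hk
      linarith
    have : 0 ≤ 1/((k:ℝ)-1) := by positivity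
    linarith

lemma seq_bound (q : ℕ → ℝ) (p C : ℝ) (hq : ∀ t, 0 ≤ q t)
    (hp0 : 0 ≤ p) (hp : 3*p < 1) (hC : 0 ≤ C)
    (h1 : q 1 ≤ 4*C)
    (hrec : ∀ k : ℕ, 2 ≤ k → ((k:ℝ)^2/4) * q k ≤ C + (p/(2*(1-p))) * ∑ t ∈ Finset.Ico 2 k, q t) :
    ∀ k : ℕ, 1 ≤ k → q k ≤ 4*C/((1-3*p)*(k:ℝ)^2) := by
  have hγ : (0:ℝ) < 1 - p := by linarith
  have h3 : (0:ℝ) < 1 - 3*p := by linarith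
  intro k
  induction k using Nat.strong_induction_on with
  | _ k ih =>
    intro hk
    rcases eq_or_lt_of_le hk with h | h
    · rw [← h]
      push_cast
      rw [le_div_iff₀ (by nlinarith)]
      nlinarith
    · have hk2 : 2 ≤ k := h
      have hM : (0:ℝ) ≤ 4*C/(1-3*p) := by positivity
      have hsum : ∑ t ∈ Finset.Ico 2 k, q t ≤ 4*C/(1-3*p) := by
        calc ∑ t ∈ Finset.Ico 2 k, q t
            ≤ ∑ t ∈ Finset.Ico 2 k, (4*C/(1-3*p)) * (1/(t:ℝ)^2) := by
              apply Finset.sum_le_sum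
              intro t htm
              have ht2 : 2 ≤ t := (Finset.mem_Ico.mp htm).1
              have htk : t < k := (Finset.mem_Ico.mp htm).2
              have hit := ih t htk (by omega)
              calc q t ≤ 4*C/((1-3*p)*(t:ℝ)^2) := hit
              _ = (4*C/(1-3*p)) * (1/(t:ℝ)^2) := by
                  rw [div_mul_eq_div_div, div_eq_mul_one_div]
          _ = (4*C/(1-3*p)) * ∑ t ∈ Finset.Ico 2 k, (1/(t:ℝ)^2) := by rw [Finset.mul_sum]
          _ ≤ (4*C/(1-3*p)) * 1 := mul_le_mul_of_nonneg_left (sum_inv_sq_le k) hM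
          _ = 4*C/(1-3*p) := mul_one _
      have hr := hrec k hk2
      have hkR : (0:ℝ) < (k:ℝ) := by exact_mod_cast (by omega : 0 < k)
      have step : ((k:ℝ)^2/4)*q k ≤ C/(1-3*p) := by
        have hs2 : (p/(2*(1-p))) * ∑ t ∈ Finset.Ico 2 k, q t
            ≤ (p/(2*(1-p))) * (4*C/(1-3*p)) := mul_le_mul_of_nonneg_left hsum (by positivity)
        have e : C + (p/(2*(1-p)))*(4*C/(1-3*p)) = (C*(1-2*p+3*p^2))/((1-p)*(1-3*p)) := by
          rw [div_mul_div_comm, add_div' _ _ _ (by positivity), div_eq_div_iff (by positivity) (by positivity)]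
          ring
        have e2 : (C*(1-2*p+3*p^2))/((1-p)*(1-3*p)) ≤ C/(1-3*p) := by
          rw [div_le_div_iff₀ (by positivity) h3]
          nlinarith [mul_nonneg (mul_nonneg hC hp0) (mul_nonneg h3.le h3.le)]
        linarith
      rw [le_div_iff₀ (by positivity)]
      have step2 := mul_le_mul_of_nonneg_left step (le_of_lt (show (0:ℝ) < 4*(1-3*p) by positivity))
      have e3 : 4*(1-3*p)*(C/(1-3*p)) = 4*C := by field_simp
      nlinarith [step2]

set_option maxHeartbeats 1000000 in
theorem stmt_8 {n : ℕ}
    (F : EuclideanSpace ℝ (Fin n) → EuclideanSpace ℝ (Fin n))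
    (L η : ℝ) (hL : 0 < L)
    (hmono : ∀ z z', 0 ≤ ⟪F z - F z', z - z'⟫)
    (hlip : ∀ z z', ‖F z - F z'‖ ≤ L * ‖z - z'‖)
    (zstar : EuclideanSpace ℝ (Fin n)) (hzstar : F zstar = 0)
    (hη : 0 < η) (hηL : η < 1 / (Real.sqrt 3 * L))
    (z zh : ℕ → EuclideanSpace ℝ (Fin n))
    (hzh : ∀ k : ℕ, zh k = z k - η • F (z k) + (1/((k:ℝ)+1)) • (z 0 - z k))
    (hz : ∀ k : ℕ, z (k+1) = z k - η • F (zh k) + (1/((k:ℝ)+1)) • (z 0 - z k))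
    (D : ℝ) (hD : D = ‖z 0 - zstar‖) :
    (∀ T : ℕ, 1 ≤ T →
      ‖F (z T)‖^2 ≤ 4*(1+η*L)^2/(η^2*L^2*(1-3*η^2*L^2)) * (D^2*L^2/(T:ℝ)^2)) ∧
    (η = 1/(3*L) → ∀ T : ℕ, 1 ≤ T →
      ‖F (z T)‖^2 ≤ 96 * D^2 * L^2 / (T:ℝ)^2) := by
  -- basic scalar facts
  have hx : 0 < η*L := mul_pos hη hL
  have hs3 : (0:ℝ) < Real.sqrt 3 := Real.sqrt_pos.mpr (by norm_num)
  have hxlt : η*L < 1/Real.sqrt 3 := by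
    have h := mul_lt_mul_of_pos_right hηL hL
    rwa [show 1/(Real.sqrt 3*L)*L = 1/Real.sqrt 3 from by field_simp] at h
  have h3p : 3*(η^2*L^2) < 1 := by
    have h2 := mul_lt_mul'' hxlt hxlt hx.le hx.le
    have e : 1/Real.sqrt 3 * (1/Real.sqrt 3) = 1/3 := by
      rw [div_mul_div_comm, one_mul, Real.mul_self_sqrt (by norm_num)]
    rw [e] at h2
    nlinarith
  have hp1 : η^2*L^2 < 1 := by nlinarith
  have hγ : (0:ℝ) < 1 - η^2*L^2 := by linarith
  have hDnn : 0 ≤ D := hD ▸ norm_nonneg _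
  have hηne : η ≠ 0 := ne_of_gt hη
  have hLne : L ≠ 0 := ne_of_gt hL
  -- the coefficient
  set cf : ℝ := η^2*L^2/(2*(1-η^2*L^2)) with hcf
  have hcoef : 0 ≤ cf := by rw [hcf]; positivity
  -- the potential
  set V : ℕ → ℝ := fun k => η*(k:ℝ)^2/2*‖F (z k)‖^2 + (k:ℝ)*⟪F (z k), z k - z 0⟫ with hV
  -- one-step inequality
  have VA : ∀ k : ℕ, V (k+1) ≤ V k + η*cf*‖F (z k)‖^2 := by
    intro k
    have h1 : z (k+1) - z k = -(η • F (zh k)) - (1/((k:ℝ)+1)) • (z k - z 0) := by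
      rw [hz k]; module
    have h2 : z (k+1) - zh k = η • (F (z k) - F (zh k)) := by
      rw [hz k, hzh k]; module
    have h3 : z (k+1) - z 0 = (1 - 1/((k:ℝ)+1)) • (z k - z 0) - η • F (zh k) := by
      rw [hz k]; module
    have hmk := hmono (z (k+1)) (z k)
    rw [h1] at hmk
    have hlipk := hlip (z (k+1)) (zh k)
    rw [h2, norm_smul, Real.norm_eq_abs, abs_of_pos hη] at hlipk
    have main := eag_step η L (k:ℝ) (F (z k)) (F (zh k)) (F (z (k+1))) (z k - z 0)
      hη hL (by positivity) hp1 hmk hlipk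
    rw [← hcf] at main
    have h4 : ⟪F (z (k+1)), z (k+1) - z 0⟫
        = (1 - 1/((k:ℝ)+1))*⟪F (z (k+1)), z k - z 0⟫ - η*⟪F (z (k+1)), F (zh k)⟫ := by
      rw [h3, inner_sub_right, real_inner_smul_right, real_inner_smul_right]
    simp only [hV]
    push_cast
    rw [h4]
    linarith [main]
  -- telescoping
  have VS : ∀ k : ℕ, V k ≤ η*cf * ∑ t ∈ Finset.range k, ‖F (z t)‖^2 := by
    intro k
    induction k with
    | zero => simp [hV]
    | succ k ihk =>
      rw [Finset.sum_range_succ]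
      have := VA k
      have hexp : η*cf * (∑ t ∈ Finset.range k, ‖F (z t)‖^2 + ‖F (z k)‖^2)
          = η*cf * ∑ t ∈ Finset.range k, ‖F (z t)‖^2 + η*cf * ‖F (z k)‖^2 := by ring
      rw [hexp]
      linarith
  -- lower bound on V
  have VL : ∀ k : ℕ, η*(k:ℝ)^2/2*‖F (z k)‖^2 - (k:ℝ)*(D*‖F (z k)‖) ≤ V k := by
    intro k
    have e : ⟪F (z k), z k - z 0⟫
        = ⟪F (z k) - F zstar, z k - zstar⟫ + ⟪F (z k), zstar - z 0⟫ := by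
      rw [hzstar, sub_zero, ← inner_add_right]
      congr 1
      abel
    have m := hmono (z k) zstar
    have cs : -(‖F (z k)‖*‖zstar - z 0‖) ≤ ⟪F (z k), zstar - z 0⟫ :=
      (abs_le.mp (abs_real_inner_le_norm _ _)).1
    have hns : ‖zstar - z 0‖ = D := by rw [hD, norm_sub_rev]
    have inlb : -(D*‖F (z k)‖) ≤ ⟪F (z k), z k - z 0⟫ := by
      rw [e]
      rw [hns] at cs
      linarith
    have hmul := mul_le_mul_of_nonneg_left inlb (show (0:ℝ) ≤ (k:ℝ) by positivity)
    simp only [hV]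
    linarith [hmul]
  -- the recursion
  have Hrec : ∀ k : ℕ, ((k:ℝ)^2/4) * ‖F (z k)‖^2
      ≤ D^2/η^2 + cf * ∑ t ∈ Finset.range k, ‖F (z t)‖^2 := by
    intro k
    have hA := (VL k).trans (VS k)
    have hy : 0 ≤ (η*(k:ℝ)*‖F (z k)‖ - 2*D)^2 := sq_nonneg _
    have hη2 : (0:ℝ) < 4*η^2 := by positivity
    have goal' : 4*η^2*(((k:ℝ)^2/4) * ‖F (z k)‖^2)
        ≤ 4*η^2*(D^2/η^2 + cf * ∑ t ∈ Finset.range k, ‖F (z t)‖^2) := by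
      have e : 4*η^2*(D^2/η^2 + cf * ∑ t ∈ Finset.range k, ‖F (z t)‖^2)
          = 4*D^2 + 4*η^2*cf * ∑ t ∈ Finset.range k, ‖F (z t)‖^2 := by
        field_simp
      rw [e]
      have h5 := mul_le_mul_of_nonneg_left hA (le_of_lt (show (0:ℝ) < 2*η by positivity))
      have hy' : 4*η*(k:ℝ)*(D*‖F (z k)‖) ≤ η^2*(k:ℝ)^2*‖F (z k)‖^2 + 4*D^2 := by nlinarith [hy]
      linarith [h5, hy']
    exact le_of_mul_le_mul_left goal' hη2
  -- bounds on the first two gradients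
  have hg0 : ‖F (z 0)‖ ≤ L*D := by
    have h := hlip (z 0) zstar
    rwa [hzstar, sub_zero, ← hD] at h
  have hzh0 : zh 0 - zstar = (z 0 - zstar) - η • F (z 0) := by
    rw [hzh 0]
    push_cast
    rw [sub_self, smul_zero]
    abel
  have hb0 : ‖F (zh 0)‖ ≤ L*(D + η*(L*D)) := by
    have h := hlip (zh 0) zstar
    rw [hzstar, sub_zero, hzh0] at h
    have h2 : ‖(z 0 - zstar) - η • F (z 0)‖ ≤ D + η*(L*D) := by
      calc ‖(z 0 - zstar) - η • F (z 0)‖ ≤ ‖z 0 - zstar‖ + ‖η • F (z 0)‖ := norm_sub_le _ _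
      _ ≤ D + η*(L*D) := by
        rw [norm_smul, Real.norm_eq_abs, abs_of_pos hη, ← hD]
        have := mul_le_mul_of_nonneg_left hg0 hη.le
        linarith
    calc ‖F (zh 0)‖ ≤ L*‖(z 0 - zstar) - η • F (z 0)‖ := h
    _ ≤ L*(D + η*(L*D)) := mul_le_mul_of_nonneg_left h2 hL.le
  have hz1 : z 1 - zstar = (z 0 - zstar) - η • F (zh 0) := by
    rw [hz 0]
    push_cast
    rw [sub_self, smul_zero]
    abel
  have hg1 : ‖F (z 1)‖ ≤ L*(D + η*(L*(D + η*(L*D)))) := by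
    have h := hlip (z 1) zstar
    rw [hzstar, sub_zero, hz1] at h
    have h2 : ‖(z 0 - zstar) - η • F (zh 0)‖ ≤ D + η*(L*(D + η*(L*D))) := by
      calc ‖(z 0 - zstar) - η • F (zh 0)‖ ≤ ‖z 0 - zstar‖ + ‖η • F (zh 0)‖ := norm_sub_le _ _
      _ ≤ D + η*(L*(D + η*(L*D))) := by
        rw [norm_smul, Real.norm_eq_abs, abs_of_pos hη, ← hD]
        have := mul_le_mul_of_nonneg_left hb0 hη.le
        linarith
    calc ‖F (z 1)‖ ≤ L*‖(z 0 - zstar) - η • F (zh 0)‖ := h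
    _ ≤ L*(D + η*(L*(D + η*(L*D)))) := mul_le_mul_of_nonneg_left h2 hL.le
  -- the constant
  set Cc : ℝ := D^2/η^2 + cf*(‖F (z 0)‖^2 + ‖F (z 1)‖^2) with hCc
  have hCnn : 0 ≤ Cc := by
    rw [hCc]
    have h1 : (0:ℝ) ≤ D^2/η^2 := by positivity
    have h2 : (0:ℝ) ≤ cf*(‖F (z 0)‖^2 + ‖F (z 1)‖^2) := mul_nonneg hcoef (by positivity)
    linarith
  -- hypotheses of seq_bound
  have H1 : ‖F (z 1)‖^2 ≤ 4*Cc := by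
    have h := Hrec 1
    rw [Finset.sum_range_one] at h
    push_cast at h
    have h2 : (0:ℝ) ≤ cf*‖F (z 1)‖^2 := mul_nonneg hcoef (by positivity)
    rw [hCc]
    linarith [h, h2]
  have H2 : ∀ k : ℕ, 2 ≤ k → ((k:ℝ)^2/4) * ‖F (z k)‖^2
      ≤ Cc + cf * ∑ t ∈ Finset.Ico 2 k, ‖F (z t)‖^2 := by
    intro k hk2
    have h := Hrec k
    have hsplit : ∑ t ∈ Finset.range k, ‖F (z t)‖^2
        = (‖F (z 0)‖^2 + ‖F (z 1)‖^2) + ∑ t ∈ Finset.Ico 2 k, ‖F (z t)‖^2 := by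
      rw [Finset.range_eq_Ico, ← Finset.sum_Ico_consecutive _ (by omega : 0 ≤ 2) hk2]
      congr 1
      rw [← Finset.range_eq_Ico]
      simp [Finset.sum_range_succ]
    rw [hsplit] at h
    rw [hCc]
    linarith [h]
  have hfin := seq_bound (fun t => ‖F (z t)‖^2) (η^2*L^2) Cc
    (fun t => by positivity) (by positivity) h3p hCnn H1
    (by intro k hk; rw [← hcf]; exact H2 k hk)
  -- key constant bound
  have hCkey : Cc ≤ (1+η*L)^2*D^2/η^2 := by
    have hq0 : ‖F (z 0)‖^2 ≤ (L*D)^2 := pow_le_pow_left₀ (norm_nonneg _) hg0 2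
    have hq1 : ‖F (z 1)‖^2 ≤ (L*(D + η*(L*(D + η*(L*D)))))^2 :=
      pow_le_pow_left₀ (norm_nonneg _) hg1 2
    have hstep := mul_le_mul_of_nonneg_left (add_le_add hq0 hq1) hcoef
    rw [hcf] at hstep
    have hpoly : D^2/η^2 + (η^2*L^2/(2*(1-η^2*L^2)))*((L*D)^2 + (L*(D + η*(L*(D + η*(L*D)))))^2)
        ≤ (1+η*L)^2*D^2/η^2 := by
      rw [← sub_nonneg]
      have e : (1+η*L)^2*D^2/η^2
          - (D^2/η^2 + (η^2*L^2/(2*(1-η^2*L^2)))*((L*D)^2 + (L*(D + η*(L*(D + η*(L*D)))))^2))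
          = (D^2/(2*η^2*(1-η^2*L^2)))
            * (2*(1-(η*L)^2)*(1+η*L)^2 - (2*(1-(η*L)^2) + (η*L)^4*(1+(1+η*L+(η*L)^2)^2))) := by
        field_simp
        ring
      rw [e]
      exact mul_nonneg (by positivity) (xpoly_ineq (η*L) hx (by nlinarith))
    rw [hCc, hcf]
    linarith [hstep, hpoly]
  have P1 : ∀ T : ℕ, 1 ≤ T →
      ‖F (z T)‖^2 ≤ 4*(1+η*L)^2/(η^2*L^2*(1-3*η^2*L^2)) * (D^2*L^2/(T:ℝ)^2) := by
    intro T hT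
    have hTR : (0:ℝ) < (T:ℝ) := by exact_mod_cast (by omega : 0 < T)
    have h := hfin T hT
    have h3' : (0:ℝ) < 1 - 3*(η^2*L^2) := by linarith
    have h3ne : (1:ℝ) - 3*(η^2*L^2) ≠ 0 := ne_of_gt h3'
    have h3ne' : (1:ℝ) - 3*η^2*L^2 ≠ 0 := by
      intro hc; apply h3ne; linarith [hc]
    have hTne : (T:ℝ) ≠ 0 := ne_of_gt hTR
    calc ‖F (z T)‖^2 ≤ 4*Cc/((1-3*(η^2*L^2))*(T:ℝ)^2) := h
    _ ≤ 4*((1+η*L)^2*D^2/η^2)/((1-3*(η^2*L^2))*(T:ℝ)^2) := by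
        gcongr
    _ = 4*(1+η*L)^2/(η^2*L^2*(1-3*η^2*L^2)) * (D^2*L^2/(T:ℝ)^2) := by
        field_simp
  refine ⟨P1, ?_⟩
  intro hη3 T hT
  have hTR : (0:ℝ) < (T:ℝ) := by exact_mod_cast (by omega : 0 < T)
  have hTne : (T:ℝ) ≠ 0 := ne_of_gt hTR
  have h3' : (0:ℝ) < 1 - 3*(η^2*L^2) := by linarith
  calc ‖F (z T)‖^2 ≤ 4*Cc/((1-3*(η^2*L^2))*(T:ℝ)^2) := hfin T hT
  _ ≤ 4*((1+η*L)^2*D^2/η^2)/((1-3*(η^2*L^2))*(T:ℝ)^2) := by gcongr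
  _ = 96 * D^2 * L^2 / (T:ℝ)^2 := by
      rw [hη3]
      have e1 : ((1:ℝ)/(3*L))^2 = 1/(9*L^2) := by
        rw [div_pow, one_pow]; congr 1; ring
      rw [e1]
      field_simp
      ring
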